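/- arXiv:1810.01754 — 2 statements merged into one kernel-verified Lean document; each statement's English description precedes it below -/
import Mathlib

section
/- Let E be a real Hilbert space, ℐ : E → ℝ of C¹-class with ℐ(0) = 0, 𝒥(u) = ½‖u‖² - ℐ(u), and suppose (J1)–(J4) of Theorem 2.1 hold: (J1) there is r > 0 with inf_{‖u‖=r} 𝒥(u) > 0; (J2) there is q ≥ 2 with ℐ(t_n u_n)/t_n^q → ∞ whenever t_n → ∞ and u_n → u ≠ 0; (J3) for u ∈ 𝒩 and t ≠ 1, (t²-1)/2·ℐ'(u)(u) - ℐ(tu) + ℐ(u) < 0; (J4) 𝒥 is coercive on 𝒩. Then inf_𝒩 𝒥 ≥ inf_{‖u‖=r} 𝒥 > 0. -/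
open Filter

theorem stmt_10 {E : Type*} [NormedAddCommGroup E] [InnerProductSpace ℝ E]
    [CompleteSpace E]
    (I : E → ℝ) (hI : ContDiff ℝ 1 I) (hI0 : I 0 = 0)
    (J : E → ℝ) (hJ : ∀ u, J u = (1 / 2) * ‖u‖ ^ 2 - I u)
    (Neh : Set E) (hNeh : Neh = {u : E | u ≠ 0 ∧ ‖u‖ ^ 2 = fderiv ℝ I u u})
    (r : ℝ) (hr : 0 < r)
    (J1 : 0 < sInf (J '' Metric.sphere (0 : E) r))
    (q : ℝ) (hq : 2 ≤ q)
    (J2 : ∀ (t : ℕ → ℝ) (un : ℕ → E) (u : E), Tendsto t atTop atTop →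
      Tendsto un atTop (nhds u) → u ≠ 0 →
      Tendsto (fun n => I (t n • un n) / t n ^ q) atTop atTop)
    (J3 : ∀ u ∈ Neh, ∀ t : ℝ, 0 < t → t ≠ 1 →
      (t ^ 2 - 1) / 2 * fderiv ℝ I u u - I (t • u) + I u < 0)
    (J4 : ∀ un : ℕ → E, (∀ n, un n ∈ Neh) →
      Tendsto (fun n => ‖un n‖) atTop atTop → Tendsto (fun n => J (un n)) atTop atTop) :
    sInf (J '' Metric.sphere (0 : E) r) ≤ sInf (J '' Neh) ∧
      0 < sInf (J '' Metric.sphere (0 : E) r) := by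
  have hId : Differentiable ℝ I := hI.differentiable one_ne_zero
  set S := J '' Metric.sphere (0 : E) r with hS
  have hSne : S.Nonempty := by
    by_contra h
    rw [Set.not_nonempty_iff_eq_empty] at h
    rw [h, Real.sInf_empty] at J1; exact lt_irrefl 0 J1
  have hSbdd : BddBelow S := by
    by_contra h
    rw [Real.sInf_of_not_bddBelow h] at J1; exact lt_irrefl 0 J1
  obtain ⟨x, u0, hu0mem, rfl⟩ := hSne
  have hu0 : ‖u0‖ = r := by simpa [mem_sphere_zero_iff_norm] using hu0mem
  have hu0ne : u0 ≠ 0 := by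
    intro h; rw [h, norm_zero] at hu0; exact absurd hu0.symm (ne_of_gt hr)
  -- derivative of t ↦ J (t • u)
  have key : ∀ (u : E) (t : ℝ), HasDerivAt (fun s : ℝ => J (s • u))
      (t * ‖u‖ ^ 2 - fderiv ℝ I (t • u) u) t := by
    intro u t
    have h1 : HasDerivAt (fun s : ℝ => s • u) u t := by
      simpa using (hasDerivAt_id t).smul_const u
    have h2 : HasDerivAt (fun s : ℝ => I (s • u)) (fderiv ℝ I (t • u) u) t := by
      exact (hId (t • u)).hasFDerivAt.comp_hasDerivAt t h1
    have h3 : HasDerivAt (fun s : ℝ => (1 / 2 : ℝ) * ‖u‖ ^ 2 * s ^ 2) (t * ‖u‖ ^ 2) t := by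
      have h := (hasDerivAt_pow 2 t).const_mul ((1 : ℝ) / 2 * ‖u‖ ^ 2)
      refine h.congr_deriv ?_
      push_cast; ring
    have h4 := h3.sub h2
    have heq : (fun s : ℝ => (1 / 2 : ℝ) * ‖u‖ ^ 2 * s ^ 2 - I (s • u))
        = fun s : ℝ => J (s • u) := by
      funext s
      rw [hJ, norm_smul, mul_pow, Real.norm_eq_abs, sq_abs]; ring
    change HasDerivAt (fun s : ℝ => (1 / 2 : ℝ) * ‖u‖ ^ 2 * s ^ 2 - I (s • u)) _ t at h4
    rw [heq] at h4
    exact h4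
  have hdiff : Differentiable ℝ (fun s : ℝ => J (s • u0)) :=
    fun t => (key u0 t).differentiableAt
  have hcont : Continuous fun s : ℝ => J (s • u0) := hdiff.continuous
  have hJ0 : J (0 : E) = 0 := by rw [hJ]; simp [hI0]
  have hJu0pos : 0 < J u0 := lt_of_lt_of_le J1 (csInf_le hSbdd ⟨u0, hu0mem, rfl⟩)
  -- find T ≥ 1 with J (T • u0) < 0
  obtain ⟨T, hT1, hTneg⟩ : ∃ T : ℝ, 1 ≤ T ∧ J (T • u0) < 0 := by
    have htend := J2 (fun n => (n : ℝ)) (fun _ => u0) u0 tendsto_natCast_atTop_atTop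
      tendsto_const_nhds hu0ne
    have h1 : ∀ᶠ n : ℕ in atTop, ‖u0‖ ^ 2 < I ((n : ℝ) • u0) / (n : ℝ) ^ q :=
      htend.eventually_gt_atTop _
    have h2 : ∀ᶠ n : ℕ in atTop, (1 : ℝ) ≤ (n : ℝ) :=
      tendsto_natCast_atTop_atTop.eventually_ge_atTop 1
    obtain ⟨N, hN1, hN2⟩ := (h2.and h1).exists
    refine ⟨(N : ℝ), hN1, ?_⟩
    have hNpos : (0 : ℝ) < (N : ℝ) := lt_of_lt_of_le one_pos hN1
    have hqpow : (N : ℝ) ^ (2 : ℝ) ≤ (N : ℝ) ^ q :=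
      Real.rpow_le_rpow_of_exponent_le hN1 hq
    have h2' : (N : ℝ) ^ (2 : ℝ) = (N : ℝ) ^ (2 : ℕ) := by
      rw [← Real.rpow_natCast]; norm_num
    have hqpos : (0 : ℝ) < (N : ℝ) ^ q := Real.rpow_pos_of_pos hNpos q
    have hI_big : ‖u0‖ ^ 2 * (N : ℝ) ^ q < I ((N : ℝ) • u0) := by
      have := hN2
      rw [lt_div_iff₀ hqpos] at this
      linarith
    have hnorm : (0 : ℝ) < ‖u0‖ ^ 2 := pow_pos (norm_pos_iff.mpr hu0ne) 2
    rw [hJ, norm_smul, mul_pow, Real.norm_eq_abs, sq_abs]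
    have hN2le : (N : ℝ) ^ (2 : ℕ) ≤ (N : ℝ) ^ q := h2' ▸ hqpow
    nlinarith [mul_le_mul_of_nonneg_left hN2le (le_of_lt hnorm)]
  -- maximum on [0, T]
  obtain ⟨ts, hts_mem, hts_max⟩ := isCompact_Icc.exists_isMaxOn
    (Set.nonempty_Icc.mpr (by linarith : (0:ℝ) ≤ T)) (hcont.continuousOn :
      ContinuousOn (fun s : ℝ => J (s • u0)) (Set.Icc 0 T))
  have h1mem : (1 : ℝ) ∈ Set.Icc (0 : ℝ) T := ⟨zero_le_one, hT1⟩
  have hts_ge : J u0 ≤ J (ts • u0) := by simpa using hts_max h1mem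
  have hts_pos : 0 < ts := by
    rcases lt_or_eq_of_le hts_mem.1 with h | h
    · exact h
    · exfalso; rw [← h] at hts_ge; simp [hJ0] at hts_ge; linarith
  have hts_lt : ts < T := by
    rcases lt_or_eq_of_le hts_mem.2 with h | h
    · exact h
    · exfalso; rw [h] at hts_ge; linarith
  have hloc : IsLocalMax (fun s : ℝ => J (s • u0)) ts :=
    hts_max.isLocalMax (Icc_mem_nhds hts_pos hts_lt)
  have hder0 : ts * ‖u0‖ ^ 2 - fderiv ℝ I (ts • u0) u0 = 0 :=
    hloc.hasDerivAt_eq_zero (key u0 ts)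
  have hw : ts • u0 ∈ Neh := by
    rw [hNeh]
    refine ⟨smul_ne_zero (ne_of_gt hts_pos) hu0ne, ?_⟩
    rw [norm_smul, mul_pow, Real.norm_eq_abs, sq_abs, map_smul, smul_eq_mul]
    nlinarith [hder0]
  -- main inequality: every v ∈ Neh has J v ≥ sInf S
  have hmain : ∀ v ∈ Neh, sInf S ≤ J v := by
    intro v hv
    have hv' := hv
    rw [hNeh] at hv'
    obtain ⟨hvne, hvN⟩ := hv'
    have hvnorm : (0 : ℝ) < ‖v‖ := norm_pos_iff.mpr hvne
    set t := r / ‖v‖ with ht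
    have ht0 : 0 < t := div_pos hr hvnorm
    have htv : ‖t • v‖ = r := by
      rw [norm_smul, Real.norm_eq_abs, abs_of_pos ht0, ht]
      field_simp
    have hmem : J (t • v) ∈ S := ⟨t • v, by simpa [mem_sphere_zero_iff_norm] using htv, rfl⟩
    have h1 : sInf S ≤ J (t • v) := csInf_le hSbdd hmem
    rcases eq_or_ne t 1 with h | h
    · rw [h, one_smul] at h1; exact h1
    · have h3 := J3 v hv t ht0 h
      have hlt : J (t • v) < J v := by
        rw [hJ (t • v), hJ v, norm_smul, mul_pow, Real.norm_eq_abs, sq_abs, hvN]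
        nlinarith [h3]
      linarith
  constructor
  · exact le_csInf ⟨J (ts • u0), ts • u0, hw, rfl⟩
      (by rintro x ⟨v, hv, rfl⟩; exact hmain v hv)
  · exact J1
end

section
/- Let 𝒥 be a C¹ functional on a Hilbert space E with 𝒥(u) = ½‖u‖² - ℐ(u), where ℐ satisfies conditions (J1)–(J4), and let m : S → 𝒩 be the Nehari projection m(u) = t(u)u from the unit sphere S onto the Nehari manifold. Then for v ∈ S and z in the tangent space T_v S, the derivative satisfies (𝒥 ∘ m)'(v)(z) = ‖m(v)‖·𝒥'(m(v))(z); consequently ‖(𝒥 ∘ m)'(v)‖ = ‖m(v)‖·‖𝒥'(m(v))‖. -/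
open Filter RealInnerProductSpace

private lemma mvtE {E : Type*} [NormedAddCommGroup E] [NormedSpace ℝ E]
    (J : E → ℝ) (hJ : Differentiable ℝ J) (a d : E) :
    ∃ c ∈ Set.Icc (0:ℝ) 1, J (a + d) - J a = (fderiv ℝ J (a + c • d)) d := by
  have hcont : Continuous fun s : ℝ => J (a + s • d) :=
    hJ.continuous.comp (continuous_const.add (continuous_id.smul continuous_const))
  have hderiv : ∀ x : ℝ, HasDerivAt (fun s : ℝ => J (a + s • d))
      (fderiv ℝ J (a + x • d) d) x := by
    intro x
    have hline : HasDerivAt (fun s : ℝ => a + s • d) d x := by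
      simpa using ((hasDerivAt_id x).smul_const d).const_add a
    exact (hJ (a + x • d)).hasFDerivAt.comp_hasDerivAt x hline
  obtain ⟨c, hc, hc'⟩ := exists_hasDerivAt_eq_slope (fun s : ℝ => J (a + s • d))
    (fun s => fderiv ℝ J (a + s • d) d) one_pos hcont.continuousOn
    (fun x _ => hderiv x)
  refine ⟨c, ⟨hc.1.le, hc.2.le⟩, ?_⟩
  simp only [one_smul, zero_smul, add_zero, sub_zero, div_one] at hc'
  linarith [hc']

set_option maxHeartbeats 2000000 in
theorem stmt_11 {E : Type*} [NormedAddCommGroup E] [InnerProductSpace ℝ E]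
    [CompleteSpace E]
    (I : E → ℝ) (hI : ContDiff ℝ 1 I) (hI0 : I 0 = 0)
    (J : E → ℝ) (hJ : ∀ u, J u = (1 / 2) * ‖u‖ ^ 2 - I u)
    (Neh : Set E) (hNeh : Neh = {u : E | u ≠ 0 ∧ ‖u‖ ^ 2 = fderiv ℝ I u u})
    (r : ℝ) (hr : 0 < r)
    (J1 : 0 < sInf (J '' Metric.sphere (0 : E) r))
    (q : ℝ) (hq : 2 ≤ q)
    (J2 : ∀ (tn : ℕ → ℝ) (un : ℕ → E) (u : E), Tendsto tn atTop atTop →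
      Tendsto un atTop (nhds u) → u ≠ 0 →
      Tendsto (fun n => I (tn n • un n) / tn n ^ q) atTop atTop)
    (J3 : ∀ u ∈ Neh, ∀ s : ℝ, 0 < s → s ≠ 1 →
      (s ^ 2 - 1) / 2 * fderiv ℝ I u u - I (s • u) + I u < 0)
    (J4 : ∀ un : ℕ → E, (∀ n, un n ∈ Neh) →
      Tendsto (fun n => ‖un n‖) atTop atTop → Tendsto (fun n => J (un n)) atTop atTop)
    -- the Nehari projection `m(u) = t(u)u`
    (t : E → ℝ)
    (ht : ∀ u : E, u ≠ 0 → 0 < t u ∧ t u • u ∈ Neh ∧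
      ∀ s : ℝ, 0 < s → s • u ∈ Neh → s = t u) :
    ∀ v : E, ‖v‖ = 1 →
      (∀ z : E, ⟪v, z⟫ = 0 →
        fderiv ℝ (J ∘ fun u => t u • u) v z = ‖t v • v‖ * fderiv ℝ J (t v • v) z) ∧
      ‖fderiv ℝ (J ∘ fun u => t u • u) v‖ = ‖t v • v‖ * ‖fderiv ℝ J (t v • v)‖ := by
  intro v hv
  have hv0 : v ≠ 0 := by
    intro h; rw [h, norm_zero] at hv; exact one_ne_zero hv.symm
  obtain ⟨htv, hmv, huniq⟩ := ht v hv0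
  -- basic smoothness facts
  have hJfun : J = fun u => (1 / 2) * ‖u‖ ^ 2 - I u := funext hJ
  have hJc : ContDiff ℝ 1 J := by
    rw [hJfun]; exact (contDiff_const.mul (contDiff_norm_sq ℝ)).sub hI
  have hJdiff : Differentiable ℝ J := hJc.differentiable one_ne_zero
  have hJ'cont : Continuous (fderiv ℝ J) := hJc.continuous_fderiv one_ne_zero
  have hI'cont : Continuous (fderiv ℝ I) := hI.continuous_fderiv one_ne_zero
  -- membership facts for Neh
  have hmem : ∀ u ∈ Neh, u ≠ 0 ∧ ‖u‖ ^ 2 = fderiv ℝ I u u := by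
    intro u hu; rwa [hNeh] at hu
  -- J (s • u) ≤ J u for u ∈ Neh, s > 0
  have rayMax : ∀ u ∈ Neh, ∀ s : ℝ, 0 < s → J (s • u) ≤ J u := by
    intro u hu s hs
    rcases eq_or_ne s 1 with rfl | hs1
    · simp
    · have h3 := J3 u hu s hs hs1
      obtain ⟨hu0, huN⟩ := hmem u hu
      have hnorm : ‖s • u‖ ^ 2 = s ^ 2 * ‖u‖ ^ 2 := by
        rw [norm_smul, mul_pow, Real.norm_eq_abs, sq_abs]
      have hdiff : J (s • u) - J u
          = (s ^ 2 - 1) / 2 * fderiv ℝ I u u - I (s • u) + I u := by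
        rw [hJ, hJ, hnorm, ← huN]; ring
      linarith
  -- lower bound on J over the sphere of radius r
  set c := sInf (J '' Metric.sphere (0 : E) r) with hc_def
  have hbdd : BddBelow (J '' Metric.sphere (0 : E) r) := by
    by_contra hb
    rw [hc_def, Real.sInf_of_not_bddBelow hb] at J1
    exact lt_irrefl 0 J1
  have hsphere_le : ∀ x : E, ‖x‖ = r → c ≤ J x := by
    intro x hx
    exact csInf_le hbdd ⟨x, by simpa [Metric.mem_sphere, dist_zero_right] using hx, rfl⟩
  -- J ≥ c on Neh
  have hNehJ : ∀ u ∈ Neh, c ≤ J u := by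
    intro u hu
    obtain ⟨hu0, _⟩ := hmem u hu
    have hun : (0:ℝ) < ‖u‖ := norm_pos_iff.mpr hu0
    have hs : 0 < r / ‖u‖ := div_pos hr hun
    have hsph : ‖(r / ‖u‖) • u‖ = r := by
      rw [norm_smul, Real.norm_eq_abs, abs_of_pos hs, div_mul_cancel₀ _ hun.ne']
    exact le_trans (hsphere_le _ hsph) (rayMax u hu _ hs)
  -- uniform lower bound on norms of Neh elements
  have hJ0 : J 0 = 0 := by simp [hJ 0, hI0]
  obtain ⟨δ, hδpos, hδ⟩ : ∃ δ > 0, ∀ u ∈ Neh, δ ≤ ‖u‖ := by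
    have hcJ : ContinuousAt J 0 := hJdiff.continuous.continuousAt
    rw [Metric.continuousAt_iff] at hcJ
    obtain ⟨δ, hδpos, hδ⟩ := hcJ c J1
    refine ⟨δ, hδpos, fun u hu => ?_⟩
    by_contra hlt
    push_neg at hlt
    have := hδ (x := u) (by simpa [dist_zero_right] using hlt)
    rw [hJ0, Real.dist_eq, sub_zero] at this
    have := lt_of_le_of_lt (le_abs_self _) this
    exact absurd (hNehJ u hu) (not_le.mpr this)
  -- J2-based contradiction machine: no sequence un → v can have t(un) → ∞
  have noBlowup : ∀ un : ℕ → E, Tendsto un atTop (nhds v) → (∀ n, un n ≠ 0) →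
      ¬ Tendsto (fun n => t (un n)) atTop atTop := by
    intro un hun hun0 htn
    have hNe : ∀ n, t (un n) • un n ∈ Neh := fun n => (ht (un n) (hun0 n)).2.1
    have hpos : ∀ n, 0 < t (un n) := fun n => (ht (un n) (hun0 n)).1
    have hcle : ∀ n, c ≤ J (t (un n) • un n) := fun n => hNehJ _ (hNe n)
    have hI2 := J2 (fun n => t (un n)) un v htn hun hv0
    -- eventually J (t un • un) ≤ -1
    have h1 : ∀ᶠ n in atTop, (1:ℝ) ≤ t (un n) := htn.eventually_ge_atTop 1
    have h2 : ∀ᶠ n in atTop, I (t (un n) • un n) / t (un n) ^ q ≥ 2 :=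
      hI2.eventually_ge_atTop 2
    have h3 : ∀ᶠ n in atTop, ‖un n‖ ^ 2 ≤ 2 := by
      have : Tendsto (fun n => ‖un n‖ ^ 2) atTop (nhds (‖v‖ ^ 2)) :=
        (hun.norm.pow 2)
      rw [hv] at this
      exact this.eventually_le_const (by norm_num)
    have hbad : ∀ᶠ n in atTop, J (t (un n) • un n) ≤ -1 := by
      filter_upwards [h1, h2, h3] with n hn1 hn2 hn3
      set s := t (un n) with hs_def
      have hs1 : (1:ℝ) ≤ s := hn1
      have hs0 : (0:ℝ) < s := lt_of_lt_of_le one_pos hs1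
      have hrq : (1:ℝ) ≤ s ^ q := Real.one_le_rpow hs1 (by linarith)
      have hsq : s ^ 2 ≤ s ^ q := by
        calc s ^ 2 = s ^ (2:ℝ) := by
              rw [← Real.rpow_natCast s 2]; norm_num
          _ ≤ s ^ q := Real.rpow_le_rpow_of_exponent_le hs1 hq
      have hIval : 2 * s ^ q ≤ I (s • un n) := by
        have hq0 : (0:ℝ) < s ^ q := lt_of_lt_of_le one_pos hrq
        have := hn2
        rw [ge_iff_le, le_div_iff₀ hq0] at this
        linarith
      have hnorm : ‖s • un n‖ ^ 2 = s ^ 2 * ‖un n‖ ^ 2 := by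
        rw [norm_smul, mul_pow, Real.norm_eq_abs, sq_abs]
      have : J (s • un n) = (1/2) * (s ^ 2 * ‖un n‖ ^ 2) - I (s • un n) := by
        rw [hJ, hnorm]
      rw [this]
      have hup : (1/2) * (s ^ 2 * ‖un n‖ ^ 2) ≤ s ^ q := by
        have h2' : s ^ 2 * ‖un n‖ ^ 2 ≤ s ^ 2 * 2 := by
          apply mul_le_mul_of_nonneg_left hn3 (sq_nonneg s)
        nlinarith
      nlinarith
    have hcontra : ∀ᶠ _n : ℕ in atTop, c ≤ -1 := by
      filter_upwards [hbad] with n hn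
      exact le_trans (hcle n) hn
    obtain ⟨n, hn⟩ := hcontra.exists
    linarith
  -- continuity of t at v
  have hcontt : ContinuousAt t v := by
    rw [Metric.continuousAt_iff]
    by_contra hcon
    push_neg at hcon
    obtain ⟨ε, hε, hcon⟩ := hcon
    -- first: a uniform upper bound for t near v
    obtain ⟨δ', hδ'pos, M, hM⟩ : ∃ δ' > 0, ∃ M : ℝ, ∀ u : E, dist u v < δ' → t u ≤ M := by
      by_contra hUB
      push_neg at hUB
      choose un h1 h2 using fun n : ℕ =>
        hUB (1/((n:ℝ)+1)) (by positivity) ((n:ℝ))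
      have hun : Tendsto un atTop (nhds v) := by
        rw [tendsto_iff_dist_tendsto_zero]
        exact squeeze_zero (fun n => dist_nonneg) (fun n => (h1 n).le)
          tendsto_one_div_add_atTop_nhds_zero_nat
      have hun0 : ∀ n, un n ≠ 0 := by
        intro n h0
        have := h1 n
        rw [h0, dist_comm, dist_zero_right, hv] at this
        have h11 : 1/((n:ℝ)+1) ≤ 1 := by
          rw [div_le_one (by positivity)]; simp
        linarith
      have htn : Tendsto (fun n => t (un n)) atTop atTop :=
        tendsto_atTop_mono (fun n => (h2 n).le) tendsto_natCast_atTop_atTop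
      exact noBlowup un hun hun0 htn
    -- sequence violating continuity, inside the good ball
    choose un h1 h2 using fun n : ℕ => hcon (min (1/((n:ℝ)+1)) (min δ' 1))
      (lt_min (by positivity) (lt_min hδ'pos one_pos))
    have hd1 : ∀ n, dist (un n) v < 1/((n:ℝ)+1) :=
      fun n => lt_of_lt_of_le (h1 n) (min_le_left _ _)
    have hdδ : ∀ n, dist (un n) v < δ' :=
      fun n => lt_of_lt_of_le (h1 n) (le_trans (min_le_right _ _) (min_le_left _ _))
    have hd2 : ∀ n, dist (un n) v < 1 :=
      fun n => lt_of_lt_of_le (h1 n) (le_trans (min_le_right _ _) (min_le_right _ _))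
    have hun : Tendsto un atTop (nhds v) := by
      rw [tendsto_iff_dist_tendsto_zero]
      exact squeeze_zero (fun n => dist_nonneg) (fun n => (hd1 n).le)
        tendsto_one_div_add_atTop_nhds_zero_nat
    have hun0 : ∀ n, un n ≠ 0 := by
      intro n h0
      have := hd2 n
      rw [h0, dist_comm, dist_zero_right, hv] at this
      linarith
    have hnormle : ∀ n, ‖un n‖ ≤ 2 := by
      intro n
      have := hd2 n
      rw [dist_eq_norm] at this
      calc ‖un n‖ = ‖(un n - v) + v‖ := by simp
        _ ≤ ‖un n - v‖ + ‖v‖ := norm_add_le _ _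
        _ ≤ 2 := by rw [hv]; linarith
    have hlb : ∀ n, δ/2 ≤ t (un n) := by
      intro n
      have hNe := (ht (un n) (hun0 n)).2.1
      have hpos := (ht (un n) (hun0 n)).1
      have hδn := hδ _ hNe
      rw [norm_smul, Real.norm_eq_abs, abs_of_pos hpos] at hδn
      have hn2 : ‖un n‖ ≤ 2 := hnormle n
      have h0 : 0 < ‖un n‖ := norm_pos_iff.mpr (hun0 n)
      nlinarith
    have hub : ∀ n, t (un n) ≤ M := fun n => hM _ (hdδ n)
    -- Bolzano–Weierstrass
    obtain ⟨s, hs_mem, φ, hφ, hconv⟩ :=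
      tendsto_subseq_of_bounded (Metric.isBounded_Icc (δ/2) M)
        (x := fun n => t (un n)) (fun n => ⟨hlb n, hub n⟩)
    rw [IsClosed.closure_eq isClosed_Icc] at hs_mem
    have hs0 : 0 < s := lt_of_lt_of_le (half_pos hδpos) hs_mem.1
    have hunφ : Tendsto (fun n => un (φ n)) atTop (nhds v) :=
      hun.comp hφ.tendsto_atTop
    have hlim : Tendsto (fun n => t (un (φ n)) • un (φ n)) atTop (nhds (s • v)) :=
      hconv.smul hunφ
    -- Neh is closed under this limit
    have hF : Continuous fun x : E => ‖x‖ ^ 2 - fderiv ℝ I x x :=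
      (continuous_norm.pow 2).sub (hI'cont.clm_apply continuous_id)
    have hFn : ∀ n, ‖t (un (φ n)) • un (φ n)‖ ^ 2
        - fderiv ℝ I (t (un (φ n)) • un (φ n)) (t (un (φ n)) • un (φ n)) = 0 := by
      intro n
      obtain ⟨_, hN⟩ := hmem _ (ht (un (φ n)) (hun0 (φ n))).2.1
      linarith
    have hF0 : ‖s • v‖ ^ 2 - fderiv ℝ I (s • v) (s • v) = 0 := by
      have h1 := (hF.tendsto (s • v)).comp hlim
      have h2 : Tendsto (fun n : ℕ => (0:ℝ)) atTop (nhds 0) := tendsto_const_nhds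
      have : Tendsto (fun n => ‖t (un (φ n)) • un (φ n)‖ ^ 2
          - fderiv ℝ I (t (un (φ n)) • un (φ n)) (t (un (φ n)) • un (φ n)))
          atTop (nhds (‖s • v‖ ^ 2 - fderiv ℝ I (s • v) (s • v))) := h1
      rw [funext hFn] at this
      exact tendsto_nhds_unique this h2
    have hsvN : s • v ∈ Neh := by
      rw [hNeh]
      exact ⟨smul_ne_zero hs0.ne' hv0, by linarith⟩
    have hseq : s = t v := huniq s hs0 hsvN
    -- but dist (t (un (φ n))) (t v) ≥ ε with limit dist s (t v) = 0
    have hdistlim : Tendsto (fun n => dist (t (un (φ n))) (t v)) atTop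
        (nhds (dist s (t v))) := (hconv.dist tendsto_const_nhds)
    have : ε ≤ dist s (t v) :=
      ge_of_tendsto hdistlim (Eventually.of_forall fun n => h2 (φ n))
    rw [← hseq, dist_self] at this
    linarith
  -- the main derivative computation via MVT squeeze
  have key : HasFDerivAt (J ∘ fun u => t u • u) (t v • fderiv ℝ J (t v • v)) v := by
    rw [hasFDerivAt_iff_isLittleO_nhds_zero, Asymptotics.isLittleO_iff]
    intro ε hε
    -- θ h = t (v + h) tends to t v
    have hθ : Tendsto (fun h : E => t (v + h)) (nhds 0) (nhds (t v)) := by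
      have hadd : Tendsto (fun h : E => v + h) (nhds 0) (nhds v) := by
        exact (continuous_const.add continuous_id : Continuous fun h : E => v + h).tendsto' (0 : E) v (by simp)
      exact Filter.Tendsto.comp hcontt hadd
    -- MVT choices
    choose c₁ hc₁ hmvt₁ using fun h : E =>
      mvtE J hJdiff (t (v + h) • v) (t (v + h) • h)
    choose c₂ hc₂ hmvt₂ using fun h : E =>
      mvtE J hJdiff (t v • v) (t v • h)
    set ξ : E → E := fun h => t (v + h) • v + c₁ h • (t (v + h) • h) with hξ_def
    set η : E → E := fun h => t v • v + c₂ h • (t v • h) with hη_def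
    -- ξ, η tend to t v • v
    have hξlim : Tendsto ξ (nhds 0) (nhds (t v • v)) := by
      rw [tendsto_iff_norm_sub_tendsto_zero]
      have hbound : ∀ h : E, ‖ξ h - t v • v‖ ≤ |t (v + h) - t v| + |t (v + h)| * ‖h‖ := by
        intro h
        have : ξ h - t v • v = (t (v + h) - t v) • v + c₁ h • (t (v + h) • h) := by
          rw [hξ_def]; simp only [sub_smul]; abel
        rw [this]
        calc ‖(t (v + h) - t v) • v + c₁ h • (t (v + h) • h)‖
            ≤ ‖(t (v + h) - t v) • v‖ + ‖c₁ h • (t (v + h) • h)‖ := norm_add_le _ _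
          _ ≤ |t (v + h) - t v| + |t (v + h)| * ‖h‖ := by
              rw [norm_smul, norm_smul, norm_smul, hv, Real.norm_eq_abs,
                Real.norm_eq_abs, Real.norm_eq_abs, mul_one]
              have h1 : |c₁ h| ≤ 1 := by
                rw [abs_le]; exact ⟨by linarith [(hc₁ h).1], (hc₁ h).2⟩
              have h2 : |c₁ h| * (|t (v + h)| * ‖h‖) ≤ |t (v + h)| * ‖h‖ :=
                mul_le_of_le_one_left (by positivity) h1
              linarith
      have htend : Tendsto (fun h : E => |t (v + h) - t v| + |t (v + h)| * ‖h‖)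
          (nhds 0) (nhds 0) := by
        have h1 : Tendsto (fun h : E => |t (v + h) - t v|) (nhds 0) (nhds 0) := by
          have := (hθ.sub (tendsto_const_nhds (x := t v))).abs
          simpa using this
        have h2 : Tendsto (fun h : E => |t (v + h)| * ‖h‖) (nhds 0) (nhds 0) := by
          have := hθ.abs.mul (tendsto_norm_zero (E := E))
          simpa using this
        simpa using h1.add h2
      exact squeeze_zero (fun h => norm_nonneg _) hbound htend
    have hηlim : Tendsto η (nhds 0) (nhds (t v • v)) := by
      rw [tendsto_iff_norm_sub_tendsto_zero]
      have hbound : ∀ h : E, ‖η h - t v • v‖ ≤ |t v| * ‖h‖ := by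
        intro h
        have : η h - t v • v = c₂ h • (t v • h) := by
          show t v • v + c₂ h • t v • h - t v • v = _
          rw [add_sub_cancel_left]
        rw [this, norm_smul, norm_smul, Real.norm_eq_abs, Real.norm_eq_abs]
        have h1 : |c₂ h| ≤ 1 := by
          rw [abs_le]; exact ⟨by linarith [(hc₂ h).1], (hc₂ h).2⟩
        have h2 : |c₂ h| * (|t v| * ‖h‖) ≤ |t v| * ‖h‖ :=
          mul_le_of_le_one_left (by positivity) h1
        linarith
      have htend : Tendsto (fun h : E => |t v| * ‖h‖) (nhds 0) (nhds 0) := by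
        have := (tendsto_const_nhds (x := |t v|) (f := nhds (0:E))).mul
          (tendsto_norm_zero (E := E))
        simpa using this
      exact squeeze_zero (fun h => norm_nonneg _) hbound htend
    -- operator norm convergences
    have hG₁ : Tendsto (fun h : E =>
        ‖t (v + h) • fderiv ℝ J (ξ h) - t v • fderiv ℝ J (t v • v)‖)
        (nhds 0) (nhds 0) := by
      have := ((hθ.smul ((hJ'cont.tendsto (t v • v)).comp hξlim)).sub
        (tendsto_const_nhds (x := t v • fderiv ℝ J (t v • v)))).norm
      simpa only [Function.comp_def, sub_self, norm_zero] using this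
    have hG₂ : Tendsto (fun h : E =>
        ‖t v • fderiv ℝ J (η h) - t v • fderiv ℝ J (t v • v)‖)
        (nhds 0) (nhds 0) := by
      have := (((tendsto_const_nhds (x := t v) (f := nhds (0:E))).smul
        ((hJ'cont.tendsto (t v • v)).comp hηlim)).sub
        (tendsto_const_nhds (x := t v • fderiv ℝ J (t v • v)))).norm
      simpa only [Function.comp_def, sub_self, norm_zero] using this
    have hev₁ : ∀ᶠ h : E in nhds 0,
        ‖t (v + h) • fderiv ℝ J (ξ h) - t v • fderiv ℝ J (t v • v)‖ ≤ ε :=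
      hG₁.eventually_le_const hε
    have hev₂ : ∀ᶠ h : E in nhds 0,
        ‖t v • fderiv ℝ J (η h) - t v • fderiv ℝ J (t v • v)‖ ≤ ε :=
      hG₂.eventually_le_const hε
    have hev₃ : ∀ᶠ h : E in nhds 0, ‖h‖ < 1 := by
      have := Metric.ball_mem_nhds (0:E) one_pos
      exact Filter.eventually_of_mem this (fun x hx => by
        simpa [mem_ball_zero_iff] using hx)
    filter_upwards [hev₁, hev₂, hev₃] with h hA hB hh
    -- pointwise estimate
    have hne : v + h ≠ 0 := by
      intro h0
      have : h = -v := by linear_combination (norm := module) h0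
      rw [this, norm_neg, hv] at hh
      linarith
    obtain ⟨hth, hthN, _⟩ := ht (v + h) hne
    -- ray-max comparisons
    have cmp1 : J (t (v + h) • v) ≤ J (t v • v) := by
      have := rayMax (t v • v) hmv (t (v + h) / t v) (div_pos hth htv)
      rwa [smul_smul, div_mul_cancel₀ _ htv.ne'] at this
    have cmp2 : J (t v • (v + h)) ≤ J (t (v + h) • (v + h)) := by
      have := rayMax (t (v + h) • (v + h)) hthN (t v / t (v + h)) (div_pos htv hth)
      rwa [smul_smul, div_mul_cancel₀ _ hth.ne'] at this
    -- MVT identities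
    have id1 : J (t (v + h) • (v + h)) - J (t (v + h) • v)
        = fderiv ℝ J (ξ h) (t (v + h) • h) := by
      have := hmvt₁ h
      rwa [← smul_add] at this
    have id2 : J (t v • (v + h)) - J (t v • v)
        = fderiv ℝ J (η h) (t v • h) := by
      have := hmvt₂ h
      rwa [← smul_add] at this
    -- assemble
    simp only [Function.comp]
    set D : ℝ := (t v • fderiv ℝ J (t v • v)) h with hD_def
    have hDval : D = t v * fderiv ℝ J (t v • v) h := by
      rw [hD_def]; simp [smul_eq_mul]
    have hAval : (t (v + h) • fderiv ℝ J (ξ h) - t v • fderiv ℝ J (t v • v)) h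
        = fderiv ℝ J (ξ h) (t (v + h) • h) - D := by
      simp [hDval, map_smul, smul_eq_mul]
    have hBval : (t v • fderiv ℝ J (η h) - t v • fderiv ℝ J (t v • v)) h
        = fderiv ℝ J (η h) (t v • h) - D := by
      simp [hDval, map_smul, smul_eq_mul]
    have hAbound : fderiv ℝ J (ξ h) (t (v + h) • h) - D ≤ ε * ‖h‖ := by
      rw [← hAval]
      calc (t (v + h) • fderiv ℝ J (ξ h) - t v • fderiv ℝ J (t v • v)) h
          ≤ |(t (v + h) • fderiv ℝ J (ξ h) - t v • fderiv ℝ J (t v • v)) h| :=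
            le_abs_self _
        _ ≤ ‖t (v + h) • fderiv ℝ J (ξ h) - t v • fderiv ℝ J (t v • v)‖ * ‖h‖ := by
            rw [← Real.norm_eq_abs]
            exact ContinuousLinearMap.le_opNorm _ h
        _ ≤ ε * ‖h‖ := mul_le_mul_of_nonneg_right hA (norm_nonneg h)
    have hBbound : -(ε * ‖h‖) ≤ fderiv ℝ J (η h) (t v • h) - D := by
      rw [← hBval]
      have h1 : |(t v • fderiv ℝ J (η h) - t v • fderiv ℝ J (t v • v)) h| ≤ ε * ‖h‖ := by
        calc |(t v • fderiv ℝ J (η h) - t v • fderiv ℝ J (t v • v)) h|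
            ≤ ‖t v • fderiv ℝ J (η h) - t v • fderiv ℝ J (t v • v)‖ * ‖h‖ := by
              rw [← Real.norm_eq_abs]
              exact ContinuousLinearMap.le_opNorm _ h
          _ ≤ ε * ‖h‖ := mul_le_mul_of_nonneg_right hB (norm_nonneg h)
      linarith [neg_abs_le ((t v • fderiv ℝ J (η h) - t v • fderiv ℝ J (t v • v)) h)]
    -- squeeze
    have hup : J (t (v + h) • (v + h)) - J (t v • v) - D ≤ ε * ‖h‖ := by
      have : J (t (v + h) • (v + h)) - J (t v • v)
          ≤ fderiv ℝ J (ξ h) (t (v + h) • h) := by linarith [id1, cmp1]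
      linarith
    have hdown : -(ε * ‖h‖) ≤ J (t (v + h) • (v + h)) - J (t v • v) - D := by
      have : fderiv ℝ J (η h) (t v • h)
          ≤ J (t (v + h) • (v + h)) - J (t v • v) := by linarith [id2, cmp2]
      linarith
    rw [Real.norm_eq_abs, abs_le]
    constructor <;> [linarith; linarith]
  -- conclude
  have hfd := key.fderiv
  have hmvnorm : ‖t v • v‖ = t v := by
    rw [norm_smul, hv, Real.norm_eq_abs, abs_of_pos htv, mul_one]
  constructor
  · intro z _
    rw [hfd, hmvnorm]
    simp [smul_eq_mul]
  · rw [hfd, hmvnorm, norm_smul, Real.norm_eq_abs, abs_of_pos htv]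
end
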